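/- arXiv:2602.01583 — 5 statements merged into one kernel-verified Lean document; each statement's English description precedes it below -/
import Mathlib

section
/- Let 𝔽 be a field and F ∈ 𝔽[X₁,…,Xₙ] a non-homogeneous polynomial of total degree d, with decomposition F = F_d + H where F_d is the leading form of F and H = F − F_d, so that the degree-gap of F is γ(F) = d − deg H. If F_d is squarefree, then every divisor G of F has degree-gap at least γ(F); concretely, for every polynomial G dividing F and every natural number j with deg G − γ(F) < j < deg G, the homogeneous component of G in degree j is zero. -/
open MvPolynomial Finset

lemma finsupp_degree_add' {σ : Type*} (a b : σ →₀ ℕ) :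
    Finsupp.degree (a + b) = Finsupp.degree a + Finsupp.degree b := by
  classical
  simp only [Finsupp.degree_eq_weight_one, map_add]

lemma top_hc_ne_zero {σ : Type*} {R : Type*} [CommSemiring R] (p : MvPolynomial σ R) (h : p ≠ 0) :
    homogeneousComponent p.totalDegree p ≠ 0 := by
  classical
  obtain ⟨d, hd, hdeg⟩ := Finset.exists_mem_eq_sup p.support
    (support_nonempty.mpr h) (fun s => s.sum fun _ e => e)
  intro hcon
  have h2 := coeff_homogeneousComponent p.totalDegree p d
  rw [hcon] at h2
  simp only [coeff_zero] at h2
  rw [if_pos] at h2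
  · exact mem_support_iff.mp hd h2.symm
  · rw [MvPolynomial.totalDegree, hdeg]
    simp [Finsupp.degree, Finsupp.sum]; rfl

lemma hc_mul {σ : Type*} {R : Type*} [CommSemiring R] (p q : MvPolynomial σ R) (m : ℕ) :
    homogeneousComponent m (p * q) =
      ∑ ij ∈ Finset.HasAntidiagonal.antidiagonal m, homogeneousComponent ij.1 p * homogeneousComponent ij.2 q := by
  classical
  ext d
  rw [coeff_homogeneousComponent, coeff_mul, coeff_sum]
  simp only [coeff_mul, coeff_homogeneousComponent]
  rw [Finset.sum_comm]
  have key : ∀ uv ∈ Finset.HasAntidiagonal.antidiagonal d, (∑ ij ∈ Finset.HasAntidiagonal.antidiagonal m,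
      (if (uv : (σ →₀ ℕ) × (σ →₀ ℕ)).1.degree = ij.1 then coeff uv.1 p else 0) *
      (if uv.2.degree = ij.2 then coeff uv.2 q else 0))
      = if d.degree = m then coeff uv.1 p * coeff uv.2 q else 0 := by
    intro uv huv
    have hdeg : uv.1.degree + uv.2.degree = d.degree := by
      rw [← finsupp_degree_add', Finset.HasAntidiagonal.mem_antidiagonal.mp huv]
    by_cases hdm : d.degree = m
    · rw [if_pos hdm, Finset.sum_eq_single (uv.1.degree, uv.2.degree)]
      · simp
      · rintro ⟨i, j⟩ hij hne
        rcases eq_or_ne uv.1.degree i with h1 | h1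
        · rcases eq_or_ne uv.2.degree j with h2 | h2
          · exact absurd (by rw [← h1, ← h2]) hne
          · simp [if_neg h2]
        · simp [if_neg h1]
      · intro hnotmem
        exact absurd (Finset.HasAntidiagonal.mem_antidiagonal.mpr (by rw [hdeg, hdm])) hnotmem
    · rw [if_neg hdm]
      apply Finset.sum_eq_zero
      rintro ⟨i, j⟩ hij
      have hij' := Finset.HasAntidiagonal.mem_antidiagonal.mp hij
      rcases eq_or_ne uv.1.degree i with h1 | h1
      · rcases eq_or_ne uv.2.degree j with h2 | h2
        · exact absurd (by rw [← hij', ← h1, ← h2, hdeg]) hdm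
        · simp [if_neg h2]
      · simp [if_neg h1]
  rw [Finset.sum_congr rfl key]
  by_cases hdm : d.degree = m
  · simp [hdm]
  · simp [hdm]

lemma hc_top_mul {σ : Type*} {R : Type*} [CommSemiring R] (p q : MvPolynomial σ R) :
    homogeneousComponent (p.totalDegree + q.totalDegree) (p * q) =
      homogeneousComponent p.totalDegree p * homogeneousComponent q.totalDegree q := by
  rw [hc_mul, Finset.sum_eq_single (p.totalDegree, q.totalDegree)]
  · rintro ⟨a, b⟩ hab hne
    have hab' := Finset.HasAntidiagonal.mem_antidiagonal.mp hab
    rcases lt_or_ge p.totalDegree a with h | h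
    · rw [homogeneousComponent_eq_zero _ p h, zero_mul]
    · rcases eq_or_ne b q.totalDegree with h2 | h2
      · have ha : a = p.totalDegree := by simp only at hab'; omega
        subst ha; subst h2; exact absurd rfl hne
      · have : q.totalDegree < b := by simp only at hab'; omega
        rw [homogeneousComponent_eq_zero _ q this, mul_zero]
  · intro h; simp [Finset.HasAntidiagonal.mem_antidiagonal] at h

lemma td_mul {σ : Type*} {R : Type*} [CommRing R] [IsDomain R]
    (p q : MvPolynomial σ R) (hp : p ≠ 0) (hq : q ≠ 0) :
    (p * q).totalDegree = p.totalDegree + q.totalDegree := by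
  refine le_antisymm (totalDegree_mul p q) ?_
  by_contra h
  push_neg at h
  have hz := homogeneousComponent_eq_zero _ (p * q) h
  rw [hc_top_mul] at hz
  exact mul_ne_zero (top_hc_ne_zero p hp) (top_hc_ne_zero q hq) hz

/-- If `F = F_d + H` (leading form plus lower part), `H ≠ 0` (so `F` is non-homogeneous),
and the leading form `F_d` is squarefree, then every divisor `G` of `F` has degree-gap
at least `γ(F) = deg F − deg H`: all homogeneous components of `G` in degrees strictly
between `deg G − γ(F)` and `deg G` vanish. -/
theorem degreeGap_of_divisor {n : ℕ} {𝔽 : Type*} [Field 𝔽]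
    (F H : MvPolynomial (Fin n) 𝔽)
    (hH : H = F - homogeneousComponent F.totalDegree F)
    (hH0 : H ≠ 0)
    (hsf : Squarefree (homogeneousComponent F.totalDegree F)) :
    ∀ G : MvPolynomial (Fin n) 𝔽, G ∣ F →
      ∀ j : ℕ, (G.totalDegree : ℤ) - ((F.totalDegree : ℤ) - (H.totalDegree : ℤ)) < (j : ℤ) →
        j < G.totalDegree → homogeneousComponent j G = 0 := by
  classical
  intro G hGF j' hlow hupp
  by_contra hne
  obtain ⟨K, hFK⟩ := hGF
  have hF0 : F ≠ 0 := by
    rintro rfl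
    simp only [map_zero, sub_zero] at hH
    exact hH0 (by simp [hH])
  have hG0 : G ≠ 0 := fun h => hF0 (by rw [hFK, h, zero_mul])
  have hK0 : K ≠ 0 := fun h => hF0 (by rw [hFK, h, mul_zero])
  set g := G.totalDegree with hg
  set k := K.totalDegree with hk
  have hGg : homogeneousComponent g G ≠ 0 := top_hc_ne_zero G hG0
  have hKk : homogeneousComponent k K ≠ 0 := top_hc_ne_zero K hK0
  have hd : F.totalDegree = g + k := by rw [hFK]; exact td_mul G K hG0 hK0
  have hlead : homogeneousComponent F.totalDegree F
      = homogeneousComponent g G * homogeneousComponent k K := by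
    rw [hd, hFK]; exact hc_top_mul G K
  rw [hlead] at hsf
  have hrel : IsRelPrime (homogeneousComponent g G) (homogeneousComponent k K) :=
    (squarefree_mul_iff.mp hsf).1
  -- the largest degree below g with nonzero component of G
  set S := (Finset.range g).filter (fun a => homogeneousComponent a G ≠ 0) with hSdef
  have hj'S : j' ∈ S := Finset.mem_filter.mpr ⟨Finset.mem_range.mpr hupp, hne⟩
  set j := S.max' ⟨j', hj'S⟩ with hjdef
  have hjS : j ∈ S := S.max'_mem _
  have hjlt : j < g := Finset.mem_range.mp (Finset.mem_filter.mp hjS).1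
  have hGj : homogeneousComponent j G ≠ 0 := (Finset.mem_filter.mp hjS).2
  have hj'le : j' ≤ j := S.le_max' j' hj'S
  have hmax : ∀ a, j < a → a < g → homogeneousComponent a G = 0 := by
    intro a h1 h2
    by_contra h
    exact absurd (S.le_max' a (Finset.mem_filter.mpr ⟨Finset.mem_range.mpr h2, h⟩))
      (not_le.mpr h1)
  -- the degree-(j+k) component of F is nonzero
  have hFjk : homogeneousComponent (j + k) F ≠ 0 := by
    rcases le_or_gt g (j + k) with hgle | hglt
    · have hsum : homogeneousComponent (j + k) F
          = homogeneousComponent j G * homogeneousComponent k K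
            + homogeneousComponent g G * homogeneousComponent (j + k - g) K := by
        rw [hFK, hc_mul]
        rw [← Finset.sum_subset (s₁ := ({(j, k), (g, j + k - g)} : Finset (ℕ × ℕ)))]
        · rw [Finset.sum_pair (by intro h; injection h with h1 h2; omega)]
        · intro x hx
          simp only [Finset.mem_insert, Finset.mem_singleton] at hx
          rcases hx with rfl | rfl <;> rw [Finset.HasAntidiagonal.mem_antidiagonal] <;> omega
        · rintro ⟨a, b⟩ hab hnot
          have hab' := Finset.HasAntidiagonal.mem_antidiagonal.mp hab
          simp only [Finset.mem_insert, Finset.mem_singleton, Prod.mk.injEq, not_or] at hnot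
          simp only at hab'
          rcases lt_or_ge g a with h | h
          · rw [homogeneousComponent_eq_zero _ G h, zero_mul]
          · rcases lt_or_ge k b with h2 | h2
            · rw [homogeneousComponent_eq_zero _ K h2, mul_zero]
            · -- a ≥ j; if a = j then b = k (excluded); if a = g then b = j+k-g (excluded)
              have haj : j ≤ a := by omega
              rcases eq_or_ne a g with rfl | hag
              · exact absurd (⟨rfl, by omega⟩ : g = g ∧ b = j + k - g) hnot.2
              · rcases eq_or_ne a j with rfl | haj'
                · exact absurd (⟨rfl, by omega⟩ : j = j ∧ b = k) hnot.1
                · rw [hmax a (by omega) (by omega), zero_mul]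
      rw [hsum]
      intro hzero
      have hdvd : homogeneousComponent g G ∣
          homogeneousComponent j G * homogeneousComponent k K := by
        refine ⟨-(homogeneousComponent (j + k - g) K), ?_⟩
        have : homogeneousComponent j G * homogeneousComponent k K
            = -(homogeneousComponent g G * homogeneousComponent (j + k - g) K) := by
          linear_combination hzero
        rw [this]; ring
      have hdvd2 : homogeneousComponent g G ∣ homogeneousComponent j G :=
        hrel.dvd_of_dvd_mul_right hdvd
      obtain ⟨c, hc⟩ := hdvd2
      have hc0 : c ≠ 0 := by rintro rfl; rw [mul_zero] at hc; exact hGj hc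
      have htd : (homogeneousComponent j G).totalDegree
          = (homogeneousComponent g G).totalDegree + c.totalDegree := by
        rw [hc]; exact td_mul _ _ hGg hc0
      rw [(homogeneousComponent_isHomogeneous j G).totalDegree hGj,
        (homogeneousComponent_isHomogeneous g G).totalDegree hGg] at htd
      omega
    · have hsum : homogeneousComponent (j + k) F
          = homogeneousComponent j G * homogeneousComponent k K := by
        rw [hFK, hc_mul, Finset.sum_eq_single (j, k)]
        · rintro ⟨a, b⟩ hab hne2
          have hab' := Finset.HasAntidiagonal.mem_antidiagonal.mp hab
          simp only at hab'
          rcases lt_or_ge k b with h2 | h2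
          · rw [homogeneousComponent_eq_zero _ K h2, mul_zero]
          · have haj : j ≤ a := by omega
            rcases eq_or_ne a j with rfl | haj'
            · have hb : b = k := by omega
              subst hb; exact absurd rfl hne2
            · rw [hmax a (by omega) (by omega), zero_mul]
        · intro h; simp [Finset.HasAntidiagonal.mem_antidiagonal] at h
      rw [hsum]
      exact mul_ne_zero hGj hKk
  -- hence H has a nonzero component in degree j+k
  have hHjk : homogeneousComponent (j + k) H ≠ 0 := by
    rw [hH, map_sub]
    rw [homogeneousComponent_of_mem (homogeneousComponent_mem F.totalDegree F),
      if_neg (by omega), sub_zero]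
    exact hFjk
  have hHdeg : j + k ≤ H.totalDegree := by
    by_contra h
    exact hHjk (homogeneousComponent_eq_zero _ H (by omega))
  omega
end

section
/- Let 𝔽 be a field and F = F_d + F_{d−γ₁} + ⋯ + F_{d−γ_m} ∈ 𝔽[X₁,…,Xₙ], where F_d and each F_{d−γ_i} are nonzero homogeneous polynomials of degrees d = deg F and d−γ_i respectively, with 0 < γ₁ < ⋯ < γ_m ≤ d, and these are all the nonzero homogeneous components of F. Assume F_d is squarefree and the homogeneous components F_d, F_{d−γ₁}, …, F_{d−γ_m} have no common nonconstant factor. Suppose γ_i ∉ span_ℕ{γ₁, …, γ_{i−1}} for some index i, and F = P·Q with P, Q nonzero of degrees s and t respectively. Denote by P_j (resp. Q_j) the homogeneous component of P (resp. Q) in degree j. Then the homogeneous component of F in degree d−γ_i equals P_s·Q_{t−γ_i} + P_{s−γ_i}·Q_t. -/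
/-- The homogeneous component of a multivariate polynomial in an integer degree `j`:
it is the usual homogeneous component for `j ≥ 0`, and `0` for negative `j`. -/
noncomputable def homComponentZ {n : ℕ} {𝔽 : Type*} [Field 𝔽]
    (P : MvPolynomial (Fin n) 𝔽) (j : ℤ) : MvPolynomial (Fin n) 𝔽 :=
  if 0 ≤ j then MvPolynomial.homogeneousComponent j.toNat P else 0

open MvPolynomial

namespace ComponentSpanAux

open Finset

variable {n : ℕ} {𝔽 : Type*} [Field 𝔽]

lemma conv (P Q : MvPolynomial (Fin n) 𝔽) (k : ℕ) :
    homogeneousComponent k (P * Q) =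
      ∑ ij ∈ Finset.HasAntidiagonal.antidiagonal k, homogeneousComponent ij.1 P * homogeneousComponent ij.2 Q := by
  ext mo
  rw [coeff_homogeneousComponent, coeff_sum]
  simp_rw [coeff_mul, coeff_homogeneousComponent]
  rw [Finset.sum_comm]
  have key : ∀ uv ∈ Finset.HasAntidiagonal.antidiagonal mo,
      (∑ ij ∈ Finset.HasAntidiagonal.antidiagonal k,
        (if Finsupp.degree (uv : (Fin n →₀ ℕ) × (Fin n →₀ ℕ)).1 = ij.1 then coeff uv.1 P else 0) *
        (if Finsupp.degree uv.2 = ij.2 then coeff uv.2 Q else 0))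
      = if Finsupp.degree mo = k then coeff uv.1 P * coeff uv.2 Q else 0 := by
    rintro ⟨u, v⟩ huv
    have hdeg : u.degree + v.degree = mo.degree := by
      rw [← Finset.HasAntidiagonal.mem_antidiagonal.mp huv]
      simp [Finsupp.degree_eq_weight_one]
    by_cases h : mo.degree = k
    · rw [if_pos h]
      rw [Finset.sum_eq_single_of_mem (u.degree, v.degree)]
      · simp
      · rw [Finset.HasAntidiagonal.mem_antidiagonal, hdeg, h]
      · rintro ⟨a, b⟩ hab hne
        by_cases h1 : u.degree = a
        · by_cases h2 : v.degree = b
          · exact absurd (by rw [← h1, ← h2]) hne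
          · simp [h2]
        · simp [h1]
    · rw [if_neg h]
      apply Finset.sum_eq_zero
      rintro ⟨a, b⟩ hab
      by_cases h1 : u.degree = a
      · by_cases h2 : v.degree = b
        · exfalso; apply h
          rw [← hdeg, h1, h2]; exact Finset.HasAntidiagonal.mem_antidiagonal.mp hab
        · simp [h2]
      · simp [h1]
  rw [Finset.sum_congr rfl key]
  split_ifs with h
  · rfl
  · simp

lemma top_ne_zero (P : MvPolynomial (Fin n) 𝔽) (hP : P ≠ 0) :
    homogeneousComponent P.totalDegree P ≠ 0 := by
  obtain ⟨mo, hmo, hdeg⟩ :=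
    Finset.exists_mem_eq_sup P.support (support_nonempty.mpr hP) (fun s => s.sum fun _ e => e)
  intro h
  have := congrArg (coeff mo) h
  rw [coeff_homogeneousComponent, coeff_zero, if_pos] at this
  · exact (mem_support_iff.mp hmo) this
  · rw [totalDegree, hdeg]; rfl

lemma mul_top (A B : MvPolynomial (Fin n) 𝔽) :
    homogeneousComponent (A.totalDegree + B.totalDegree) (A * B) =
      homogeneousComponent A.totalDegree A * homogeneousComponent B.totalDegree B := by
  rw [conv]
  rw [Finset.sum_eq_single_of_mem (A.totalDegree, B.totalDegree)]
  · rw [Finset.HasAntidiagonal.mem_antidiagonal]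
  · rintro ⟨a, b⟩ hab hne
    rw [Finset.HasAntidiagonal.mem_antidiagonal] at hab
    rcases lt_or_ge A.totalDegree a with h | h
    · rw [homogeneousComponent_eq_zero _ _ h, zero_mul]
    · have : B.totalDegree < b := by
        rcases h.lt_or_eq with h' | h'
        · omega
        · exact absurd (by simp [← h']; omega) hne
      rw [homogeneousComponent_eq_zero _ _ this, mul_zero]

lemma totalDegree_mul_eq' (A B : MvPolynomial (Fin n) 𝔽) (hA : A ≠ 0) (hB : B ≠ 0) :
    (A * B).totalDegree = A.totalDegree + B.totalDegree := by
  apply le_antisymm (totalDegree_mul A B)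
  by_contra h
  push_neg at h
  have h2 := homogeneousComponent_eq_zero (A.totalDegree + B.totalDegree) (A * B) h
  rw [mul_top] at h2
  exact mul_ne_zero (top_ne_zero A hA) (top_ne_zero B hB) h2

lemma homComponentZ_of_le (P : MvPolynomial (Fin n) 𝔽) {e t : ℕ} (h : e ≤ t) :
    homComponentZ P ((t : ℤ) - e) = homogeneousComponent (t - e) P := by
  rw [homComponentZ, if_pos (by omega), show ((t : ℤ) - e).toNat = t - e by omega]

lemma homComponentZ_of_gt (P : MvPolynomial (Fin n) 𝔽) {e t : ℕ} (h : t < e) :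
    homComponentZ P ((t : ℤ) - e) = 0 := by
  rw [homComponentZ, if_neg (by omega)]

lemma sum_two (P Q : MvPolynomial (Fin n) 𝔽) (e : ℕ) (he : 0 < e)
    (hed : e ≤ P.totalDegree + Q.totalDegree)
    (hcross : ∀ a b : ℕ, a + b = P.totalDegree + Q.totalDegree - e → a < P.totalDegree →
      b < Q.totalDegree → homogeneousComponent a P * homogeneousComponent b Q = 0) :
    homogeneousComponent (P.totalDegree + Q.totalDegree - e) (P * Q) =
      homogeneousComponent P.totalDegree P * homComponentZ Q ((Q.totalDegree : ℤ) - e)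
        + homComponentZ P ((P.totalDegree : ℤ) - e) * homogeneousComponent Q.totalDegree Q := by
  set s := P.totalDegree with hs
  set t := Q.totalDegree with ht
  rw [conv]
  have hzero : ∀ c ∈ Finset.HasAntidiagonal.antidiagonal (s + t - e),
      (c ≠ (s, t - e) ∨ t < e) → (c ≠ (s - e, t) ∨ s < e) →
      homogeneousComponent c.1 P * homogeneousComponent c.2 Q = 0 := by
    rintro ⟨a, b⟩ hab h1 h2
    rw [Finset.HasAntidiagonal.mem_antidiagonal] at hab
    rcases lt_or_ge s a with h | h
    · rw [homogeneousComponent_eq_zero _ _ h, zero_mul]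
    rcases lt_or_ge t b with h' | h'
    · rw [homogeneousComponent_eq_zero _ _ h', mul_zero]
    rcases h.lt_or_eq with ha | ha
    · rcases h'.lt_or_eq with hb | hb
      · exact hcross a b hab ha hb
      · exfalso
        rcases h2 with h2 | h2
        · exact h2 (by simp only [Prod.mk.injEq]; omega)
        · omega
    · exfalso
      rcases h1 with h1 | h1
      · exact h1 (by simp only [Prod.mk.injEq]; omega)
      · omega
  rcases le_or_gt e s with hes | hes <;> rcases le_or_gt e t with het | het
  · rw [homComponentZ_of_le P hes, homComponentZ_of_le Q het]
    rw [Finset.sum_eq_add_of_mem (s, t - e) (s - e, t)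
      (by rw [Finset.HasAntidiagonal.mem_antidiagonal]; omega) (by rw [Finset.HasAntidiagonal.mem_antidiagonal]; omega)
      (by simp only [ne_eq, Prod.mk.injEq]; omega)
      (fun c hc ⟨h1, h2⟩ => hzero c hc (Or.inl h1) (Or.inl h2))]
  · rw [homComponentZ_of_le P hes, homComponentZ_of_gt Q het, mul_zero, zero_add]
    rw [Finset.sum_eq_single_of_mem (s - e, t)
      (by rw [Finset.HasAntidiagonal.mem_antidiagonal]; omega)
      (fun c hc h2 => hzero c hc (Or.inr het) (Or.inl h2))]
  · rw [homComponentZ_of_gt P hes, homComponentZ_of_le Q het, zero_mul, add_zero]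
    rw [Finset.sum_eq_single_of_mem (s, t - e)
      (by rw [Finset.HasAntidiagonal.mem_antidiagonal]; omega)
      (fun c hc h1 => hzero c hc (Or.inl h1) (Or.inr hes))]
  · rw [homComponentZ_of_gt P hes, homComponentZ_of_gt Q het, zero_mul, mul_zero, add_zero]
    exact Finset.sum_eq_zero fun c hc => hzero c hc (Or.inr het) (Or.inr hes)

end ComponentSpanAux

open ComponentSpanAux Finset

/-- If `γ_i` is not in the ℕ-span of the earlier gaps and `F = P·Q`, then the homogeneous
component of `F` in degree `d − γ_i` equals `P_s·Q_{t−γ_i} + P_{s−γ_i}·Q_t`, where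
`s = deg P`, `t = deg Q`. -/
theorem component_eq_of_not_mem_span {n m : ℕ} {𝔽 : Type*} [Field 𝔽]
    (F Fd : MvPolynomial (Fin n) 𝔽) (G : Fin (m + 1) → MvPolynomial (Fin n) 𝔽)
    (d : ℕ) (γ : Fin (m + 1) → ℕ)
    (hF : F = Fd + ∑ i, G i)
    (hdeg : F.totalDegree = d)
    (hFd : Fd.IsHomogeneous d) (hFd0 : Fd ≠ 0)
    (hG : ∀ i, (G i).IsHomogeneous (d - γ i)) (hG0 : ∀ i, G i ≠ 0)
    (hpos : 0 < γ 0) (hmono : StrictMono γ) (hle : γ (Fin.last m) ≤ d)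
    (hsf : Squarefree Fd)
    (hrp : ∀ D : MvPolynomial (Fin n) 𝔽, D ∣ Fd → (∀ i, D ∣ G i) → IsUnit D)
    (i : Fin (m + 1))
    (hspan : γ i ∉ AddSubmonoid.closure (γ '' {j | j < i}))
    (P Q : MvPolynomial (Fin n) 𝔽) (hP0 : P ≠ 0) (hQ0 : Q ≠ 0)
    (hPQ : F = P * Q) :
    homogeneousComponent (d - γ i) F =
      homogeneousComponent P.totalDegree P * homComponentZ Q ((Q.totalDegree : ℤ) - γ i)
        + homComponentZ P ((P.totalDegree : ℤ) - γ i) * homogeneousComponent Q.totalDegree Q := by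
  set s := P.totalDegree with hs
  set t := Q.totalDegree with ht
  -- degrees of components of γ are bounded and positive
  have hγle : ∀ j, γ j ≤ d := fun j => le_trans (hmono.monotone (Fin.le_last j)) hle
  have hγpos : ∀ j, 0 < γ j := fun j => lt_of_lt_of_le hpos (hmono.monotone (Fin.zero_le j))
  -- total degree of the product
  have hd_eq : s + t = d := by
    rw [← hdeg, hPQ, totalDegree_mul_eq' P Q hP0 hQ0]
  -- structure of the components of F
  have gap_of_ne : ∀ e : ℕ, 0 < e → e ≤ d → homogeneousComponent (d - e) F ≠ 0 →
      ∃ j, γ j = e := by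
    intro e he hed hne
    rw [hF, map_add, map_sum] at hne
    have h1 : homogeneousComponent (d - e) Fd = 0 := by
      rw [homogeneousComponent_of_mem ((mem_homogeneousSubmodule _ _).mpr hFd),
        if_neg (by omega)]
    by_contra hc
    push_neg at hc
    apply hne
    rw [h1, zero_add]
    apply Finset.sum_eq_zero
    intro j _
    rw [homogeneousComponent_of_mem ((mem_homogeneousSubmodule _ _).mpr (hG j)), if_neg]
    have := hγle j
    have := hc j
    omega
  -- Fd is the top homogeneous component of F, i.e. equals P_s * Q_t
  have hFdPQ : Fd = homogeneousComponent s P * homogeneousComponent t Q := by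
    have h1 : homogeneousComponent d F = Fd := by
      rw [hF, map_add, map_sum]
      rw [homogeneousComponent_of_mem ((mem_homogeneousSubmodule _ _).mpr hFd), if_pos rfl]
      rw [Finset.sum_eq_zero, add_zero]
      intro j _
      rw [homogeneousComponent_of_mem ((mem_homogeneousSubmodule _ _).mpr (hG j)), if_neg]
      have := hγle j
      have := hγpos j
      omega
    rw [← h1, hPQ, ← hd_eq, mul_top]
  have hcop : IsRelPrime (homogeneousComponent s P) (homogeneousComponent t Q) :=
    IsRelPrime.of_squarefree_mul (hFdPQ ▸ hsf)
  have htopP := top_ne_zero P hP0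
  have htopQ := top_ne_zero Q hQ0
  -- a nonzero non-top homogeneous component forces a degree bound contradiction with divisibility
  have hdvd_contra : ∀ (A B : MvPolynomial (Fin n) 𝔽) (a b : ℕ),
      A ≠ 0 → A.IsHomogeneous a → B ≠ 0 → B.IsHomogeneous b → b < a → A ∣ B → False := by
    intro A B a b hA hAh hB hBh hba hdvd
    obtain ⟨C, hC⟩ := hdvd
    have hC0 : C ≠ 0 := by
      rintro rfl
      rw [mul_zero] at hC
      exact hB hC
    have := totalDegree_mul_eq' A C hA hC0
    rw [← hC, hBh.totalDegree hB, hAh.totalDegree hA] at this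
    omega
  -- the key induction: every "gap" of P or Q lies in the span of all the γ's
  have key : ∀ e : ℕ, 0 < e →
      ((e ≤ s ∧ homogeneousComponent (s - e) P ≠ 0) ∨
       (e ≤ t ∧ homogeneousComponent (t - e) Q ≠ 0)) →
      e ∈ AddSubmonoid.closure (Set.range γ) := by
    intro e
    induction e using Nat.strong_induction_on with
    | _ e IH =>
    intro he hAB
    have hed : e ≤ d := by rcases hAB with ⟨h, _⟩ | ⟨h, _⟩ <;> omega
    by_cases hFe : homogeneousComponent (d - e) F ≠ 0
    · obtain ⟨j, hj⟩ := gap_of_ne e he hed hFe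
      exact hj ▸ AddSubmonoid.subset_closure ⟨j, rfl⟩
    push_neg at hFe
    by_cases hcross : ∀ a b : ℕ, a + b = s + t - e → a < s → b < t →
        homogeneousComponent a P * homogeneousComponent b Q = 0
    · -- all cross terms vanish: use squarefreeness to get a contradiction
      exfalso
      have hst : P.totalDegree + Q.totalDegree = d := hd_eq
      have hsum := sum_two P Q e he (by omega) hcross
      rw [← hs, ← ht, hd_eq, ← hPQ, hFe] at hsum
      rcases hAB with ⟨hes, hPne⟩ | ⟨het, hQne⟩
      · rw [homComponentZ_of_le P hes] at hsum
        have hdvd : homogeneousComponent s P ∣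
            homogeneousComponent (s - e) P * homogeneousComponent t Q := by
          have : homogeneousComponent (s - e) P * homogeneousComponent t Q =
              -(homogeneousComponent s P * homComponentZ Q ((t : ℤ) - e)) := by
            linear_combination -hsum
          rw [this]
          exact (dvd_mul_right _ _).neg_right
        have hPdvd := hcop.dvd_of_dvd_mul_right hdvd
        exact hdvd_contra _ _ s (s - e) htopP (homogeneousComponent_isHomogeneous s P)
          hPne (homogeneousComponent_isHomogeneous (s - e) P) (by omega) hPdvd
      · rw [homComponentZ_of_le Q het] at hsum
        have hdvd : homogeneousComponent t Q ∣
            homogeneousComponent s P * homogeneousComponent (t - e) Q := by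
          have : homogeneousComponent s P * homogeneousComponent (t - e) Q =
              -(homComponentZ P ((s : ℤ) - e) * homogeneousComponent t Q) := by
            linear_combination -hsum
          rw [this]
          exact (dvd_mul_left _ _).neg_right
        have hQdvd := (hcop.symm).dvd_of_dvd_mul_left hdvd
        exact hdvd_contra _ _ t (t - e) htopQ (homogeneousComponent_isHomogeneous t Q)
          hQne (homogeneousComponent_isHomogeneous (t - e) Q) (by omega) hQdvd
    · -- some cross term is nonzero: use the induction hypothesis
      push_neg at hcross
      obtain ⟨a, b, hab, ha, hb, hne0⟩ := hcross
      have hPa : homogeneousComponent a P ≠ 0 := left_ne_zero_of_mul hne0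
      have hQb : homogeneousComponent b Q ≠ 0 := right_ne_zero_of_mul hne0
      have h1 : s - (s - a) = a := by omega
      have h2 : t - (t - b) = b := by omega
      have m1 : (s - a) ∈ AddSubmonoid.closure (Set.range γ) :=
        IH (s - a) (by omega) (by omega) (Or.inl ⟨by omega, by rw [h1]; exact hPa⟩)
      have m2 : (t - b) ∈ AddSubmonoid.closure (Set.range γ) :=
        IH (t - b) (by omega) (by omega) (Or.inr ⟨by omega, by rw [h2]; exact hQb⟩)
      have : e = (s - a) + (t - b) := by omega
      exact this ▸ AddSubmonoid.add_mem _ m1 m2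
  -- reduction: elements of the span below γ i lie in the span of the earlier γ's
  have reduce : ∀ x : ℕ, x ∈ AddSubmonoid.closure (Set.range γ) → x < γ i →
      x ∈ AddSubmonoid.closure (γ '' {j | j < i}) := by
    intro x hx
    refine AddSubmonoid.closure_induction ?_ ?_ ?_ hx
    · rintro _ ⟨j, rfl⟩ hlt
      exact AddSubmonoid.subset_closure ⟨j, hmono.lt_iff_lt.mp hlt, rfl⟩
    · intro _
      exact AddSubmonoid.zero_mem _
    · intro x y _ _ ihx ihy hlt
      exact AddSubmonoid.add_mem _ (ihx (by omega)) (ihy (by omega))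
  -- assemble
  rw [hPQ, show d - γ i = s + t - γ i by rw [hd_eq]]
  have hst : P.totalDegree + Q.totalDegree = d := hd_eq
  apply sum_two P Q (γ i) (hγpos i) (by have := hγle i; omega)
  intro a b hab ha hb
  by_contra hne0
  have hPa : homogeneousComponent a P ≠ 0 := left_ne_zero_of_mul hne0
  have hQb : homogeneousComponent b Q ≠ 0 := right_ne_zero_of_mul hne0
  have hγid : γ i ≤ d := hγle i
  have h1 : s - (s - a) = a := by omega
  have h2 : t - (t - b) = b := by omega
  have m1 := key (s - a) (by omega) (Or.inl ⟨by omega, by rw [h1]; exact hPa⟩)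
  have m2 := key (t - b) (by omega) (Or.inr ⟨by omega, by rw [h2]; exact hQb⟩)
  have hsum : (s - a) + (t - b) = γ i := by omega
  apply hspan
  rw [← hsum]
  exact AddSubmonoid.add_mem _ (reduce _ m1 (by omega)) (reduce _ m2 (by omega))
end

section
/- Let 𝔽 be a field and F = F_d + F_{d−γ₁} + ⋯ + F_{d−γ_m} ∈ 𝔽[X₁,…,Xₙ], where F_d and each F_{d−γ_i} are nonzero homogeneous polynomials of degrees d = deg F and d−γ_i respectively, with 0 < γ₁ < ⋯ < γ_m ≤ d, and these are all the nonzero homogeneous components of F. Assume F_d is squarefree and the homogeneous components F_d, F_{d−γ₁}, …, F_{d−γ_m} have no common nonconstant factor. Suppose k is a natural number with k ∉ span_ℕ{γ₁, …, γ_{m−1}} and 0 < k < γ_m, and F = P·Q with P, Q nonzero of degrees s and t respectively. Denote by P_j (resp. Q_j) the homogeneous component of P (resp. Q) in degree j. Then the homogeneous component of F in degree d−k equals P_s·Q_{t−k} + P_{s−k}·Q_t. -/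
open MvPolynomial Finset

section Aux

variable {n : ℕ} {𝔽 : Type*} [Field 𝔽]

lemma auxHC_top_ne_zero (P : MvPolynomial (Fin n) 𝔽) (hP : P ≠ 0) :
    homogeneousComponent P.totalDegree P ≠ 0 := by
  obtain ⟨d, hd, hdeg⟩ := Finset.exists_mem_eq_sup P.support
    (support_nonempty.2 hP) (fun s => s.sum fun _ e => e)
  intro h
  have : coeff d (homogeneousComponent P.totalDegree P) = coeff d P := by
    rw [coeff_homogeneousComponent, if_pos]
    rw [totalDegree, hdeg]
    simp [Finsupp.degree, Finsupp.sum]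
    rfl
  rw [h] at this
  exact (mem_support_iff.1 hd) (by simpa using this.symm)

lemma auxHC_mul (P Q : MvPolynomial (Fin n) 𝔽) (e : ℕ) :
    homogeneousComponent e (P * Q) =
      ∑ ab ∈ antidiagonal e,
        homogeneousComponent ab.1 P * homogeneousComponent ab.2 Q := by
  conv_lhs => rw [← P.sum_homogeneousComponent, ← Q.sum_homogeneousComponent]
  rw [Finset.sum_mul_sum, ← Finset.sum_product']
  rw [map_sum]
  have key : ∀ p : ℕ × ℕ,
      homogeneousComponent e (homogeneousComponent p.1 P * homogeneousComponent p.2 Q)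
        = if e = p.1 + p.2 then homogeneousComponent p.1 P * homogeneousComponent p.2 Q
          else 0 := fun p =>
    homogeneousComponent_of_mem ((mem_homogeneousSubmodule _ _).2
      ((homogeneousComponent_isHomogeneous p.1 P).mul (homogeneousComponent_isHomogeneous p.2 Q)))
  simp only [key]
  rw [← Finset.sum_filter]
  apply Finset.sum_subset
  · intro p hp
    simp only [Finset.mem_filter] at hp
    simpa [Finset.mem_antidiagonal] using hp.2.symm
  · intro p hp hnp
    simp only [Finset.mem_filter, Finset.mem_product, Finset.mem_range, Nat.lt_succ_iff,
      Finset.HasAntidiagonal.mem_antidiagonal] at hp hnp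
    by_cases h1 : P.totalDegree < p.1
    · rw [homogeneousComponent_eq_zero _ _ h1, zero_mul]
    · have h2 : Q.totalDegree < p.2 := by
        by_contra h2
        exact hnp ⟨⟨not_lt.1 h1, not_lt.1 h2⟩, hp.symm⟩
      rw [homogeneousComponent_eq_zero _ _ h2, mul_zero]

lemma auxHC_top_mul (P Q : MvPolynomial (Fin n) 𝔽) :
    homogeneousComponent (P.totalDegree + Q.totalDegree) (P * Q) =
      homogeneousComponent P.totalDegree P * homogeneousComponent Q.totalDegree Q := by
  rw [auxHC_mul]
  apply Finset.sum_eq_single (P.totalDegree, Q.totalDegree)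
  · intro b hb hne
    rw [Finset.HasAntidiagonal.mem_antidiagonal] at hb
    by_cases h1 : P.totalDegree < b.1
    · rw [homogeneousComponent_eq_zero _ _ h1, zero_mul]
    · have h2 : Q.totalDegree < b.2 := by
        rcases lt_or_eq_of_le (not_lt.1 h1) with h | h
        · omega
        · exact absurd (Prod.ext h (by omega)) hne
      rw [homogeneousComponent_eq_zero _ _ h2, mul_zero]
  · intro h
    simp [Finset.mem_antidiagonal] at h

lemma auxTD_mul (P Q : MvPolynomial (Fin n) 𝔽) (hP : P ≠ 0) (hQ : Q ≠ 0) :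
    (P * Q).totalDegree = P.totalDegree + Q.totalDegree := by
  refine le_antisymm (totalDegree_mul P Q) (le_of_not_gt fun h => ?_)
  have := homogeneousComponent_eq_zero _ (P * Q) h
  rw [auxHC_top_mul] at this
  exact mul_ne_zero (auxHC_top_ne_zero P hP) (auxHC_top_ne_zero Q hQ) this

lemma auxTD_dvd {A B : MvPolynomial (Fin n) 𝔽} (h : A ∣ B) (hB : B ≠ 0) :
    A.totalDegree ≤ B.totalDegree := by
  obtain ⟨C, rfl⟩ := h
  rcases mul_ne_zero_iff.1 hB with ⟨hA, hC⟩
  rw [auxTD_mul A C hA hC]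
  exact le_self_add

lemma homComponentZ_of_le (P : MvPolynomial (Fin n) 𝔽) {a b : ℕ} (h : b ≤ a) :
    homComponentZ P ((a : ℤ) - b) = homogeneousComponent (a - b) P := by
  have e : ((a : ℤ) - b).toNat = a - b := by omega
  rw [homComponentZ, if_pos (by omega : (0:ℤ) ≤ (a:ℤ) - b), e]

lemma homComponentZ_of_lt (P : MvPolynomial (Fin n) 𝔽) {a b : ℕ} (h : a < b) :
    homComponentZ P ((a : ℤ) - b) = 0 :=
  if_neg (by omega)

lemma sum_antidiag_fst {M : Type*} [AddCommMonoid M] (N s : ℕ) (c : M) :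
    ∑ ab ∈ antidiagonal N, (if ab.1 = s then c else 0) = if s ≤ N then c else 0 := by
  by_cases h : s ≤ N
  · rw [if_pos h]
    rw [Finset.sum_eq_single (s, N - s)]
    · rw [if_pos rfl]
    · rintro ⟨a, b⟩ hb hne
      rw [Finset.HasAntidiagonal.mem_antidiagonal] at hb
      rw [if_neg]
      rintro rfl
      exact hne (by simp; omega)
    · intro hn
      rw [Finset.HasAntidiagonal.mem_antidiagonal] at hn
      omega
  · rw [if_neg h]
    apply Finset.sum_eq_zero
    rintro ⟨a, b⟩ hb
    rw [Finset.HasAntidiagonal.mem_antidiagonal] at hb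
    rw [if_neg]
    rintro rfl
    omega

lemma sum_antidiag_snd {M : Type*} [AddCommMonoid M] (N t : ℕ) (c : M) :
    ∑ ab ∈ antidiagonal N, (if ab.2 = t then c else 0) = if t ≤ N then c else 0 := by
  by_cases h : t ≤ N
  · rw [if_pos h]
    rw [Finset.sum_eq_single (N - t, t)]
    · rw [if_pos rfl]
    · rintro ⟨a, b⟩ hb hne
      rw [Finset.HasAntidiagonal.mem_antidiagonal] at hb
      rw [if_neg]
      rintro rfl
      exact hne (by simp; omega)
    · intro hn
      rw [Finset.HasAntidiagonal.mem_antidiagonal] at hn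
      omega
  · rw [if_neg h]
    apply Finset.sum_eq_zero
    rintro ⟨a, b⟩ hb
    rw [Finset.HasAntidiagonal.mem_antidiagonal] at hb
    rw [if_neg]
    rintro rfl
    omega

end Aux

/-- If `k ∉ span_ℕ{γ₁, …, γ_m}` (the gaps except the last), `0 < k < γ_{m+1}` and `F = P·Q`,
then the homogeneous component of `F` in degree `d − k` equals
`P_s·Q_{t−k} + P_{s−k}·Q_t`, where `s = deg P`, `t = deg Q`. -/
theorem component_eq_of_lt_last_gap {n m : ℕ} {𝔽 : Type*} [Field 𝔽]
    (F Fd : MvPolynomial (Fin n) 𝔽) (G : Fin (m + 1) → MvPolynomial (Fin n) 𝔽)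
    (d : ℕ) (γ : Fin (m + 1) → ℕ)
    (hF : F = Fd + ∑ i, G i)
    (hdeg : F.totalDegree = d)
    (hFd : Fd.IsHomogeneous d) (hFd0 : Fd ≠ 0)
    (hG : ∀ i, (G i).IsHomogeneous (d - γ i)) (hG0 : ∀ i, G i ≠ 0)
    (hpos : 0 < γ 0) (hmono : StrictMono γ) (hle : γ (Fin.last m) ≤ d)
    (hsf : Squarefree Fd)
    (hrp : ∀ D : MvPolynomial (Fin n) 𝔽, D ∣ Fd → (∀ i, D ∣ G i) → IsUnit D)
    (k : ℕ)
    (hspan : k ∉ AddSubmonoid.closure (γ '' {i | i < Fin.last m}))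
    (hk0 : 0 < k) (hkγ : k < γ (Fin.last m))
    (P Q : MvPolynomial (Fin n) 𝔽) (hP0 : P ≠ 0) (hQ0 : Q ≠ 0)
    (hPQ : F = P * Q) :
    homogeneousComponent (d - k) F =
      homogeneousComponent P.totalDegree P * homComponentZ Q ((Q.totalDegree : ℤ) - k)
        + homComponentZ P ((P.totalDegree : ℤ) - k) * homogeneousComponent Q.totalDegree Q := by
  set s := P.totalDegree with hs
  set t := Q.totalDegree with ht
  have hγpos : ∀ i, 0 < γ i := fun i => lt_of_lt_of_le hpos (hmono.monotone (Fin.zero_le i))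
  have hγle : ∀ i, γ i ≤ d := fun i => le_trans (hmono.monotone (Fin.le_last i)) hle
  have hγS : ∀ j : Fin (m+1), j ≠ Fin.last m →
      γ j ∈ AddSubmonoid.closure (γ '' {i | i < Fin.last m}) := fun j hj =>
    AddSubmonoid.subset_closure ⟨j, lt_of_le_of_ne (Fin.le_last j) hj, rfl⟩
  have hst : s + t = d := by rw [← hdeg, hPQ, auxTD_mul P Q hP0 hQ0]
  have hcdF : homogeneousComponent d F = Fd := by
    rw [hF, map_add, map_sum,
      homogeneousComponent_of_mem ((mem_homogeneousSubmodule _ _).2 hFd), if_pos rfl]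
    rw [Finset.sum_eq_zero fun j (_ : j ∈ Finset.univ) => ?_, add_zero]
    rw [homogeneousComponent_of_mem ((mem_homogeneousSubmodule _ _).2 (hG j)), if_neg]
    have := hγpos j; have := hγle j; omega
  have hFdPQ : Fd = homogeneousComponent s P * homogeneousComponent t Q := by
    rw [← hcdF, hPQ, ← hst, auxHC_top_mul]
  have hrel : IsRelPrime (homogeneousComponent s P) (homogeneousComponent t Q) := fun D h1 h2 =>
    hsf D (by rw [hFdPQ]; exact mul_dvd_mul h1 h2)
  have hPs0 : homogeneousComponent s P ≠ 0 := auxHC_top_ne_zero P hP0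
  have hQt0 : homogeneousComponent t Q ≠ 0 := auxHC_top_ne_zero Q hQ0
  have hFzero : ∀ i, 0 < i → i < γ (Fin.last m) →
      i ∉ AddSubmonoid.closure (γ '' {i | i < Fin.last m}) →
      homogeneousComponent (d - i) F = 0 := by
    intro i h0 hlt hS
    have hid : i ≤ d := le_of_lt (lt_of_lt_of_le hlt hle)
    rw [hF, map_add, map_sum,
      homogeneousComponent_of_mem ((mem_homogeneousSubmodule _ _).2 hFd), if_neg (by omega),
      zero_add]
    apply Finset.sum_eq_zero
    intro j _
    rw [homogeneousComponent_of_mem ((mem_homogeneousSubmodule _ _).2 (hG j)), if_neg]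
    have h1 := hγpos j
    have h2 := hγle j
    have h3 : i ≠ γ j := by
      by_cases hjl : j = Fin.last m
      · subst hjl; omega
      · rintro rfl; exact hS (hγS j hjl)
    omega
  have reduce : ∀ i, 0 < i → i < γ (Fin.last m) →
      i ∉ AddSubmonoid.closure (γ '' {i | i < Fin.last m}) →
      (∀ i', 0 < i' → i' < i →
        (homComponentZ P ((s:ℤ) - i') = 0 ∧ homComponentZ Q ((t:ℤ) - i') = 0) ∨
          i' ∈ AddSubmonoid.closure (γ '' {i | i < Fin.last m})) →
      homogeneousComponent (d - i) F =
        homogeneousComponent s P * homComponentZ Q ((t:ℤ) - i)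
          + homComponentZ P ((s:ℤ) - i) * homogeneousComponent t Q := by
    intro i h0 hlt hiS hrec
    have hid : i ≤ d := le_of_lt (lt_of_lt_of_le hlt hle)
    rw [hPQ, auxHC_mul]
    have step : ∀ ab ∈ antidiagonal (d - i),
        homogeneousComponent ab.1 P * homogeneousComponent ab.2 Q =
          (if ab.1 = s then homogeneousComponent s P * homComponentZ Q ((t:ℤ) - i) else 0)
            + (if ab.2 = t then homComponentZ P ((s:ℤ) - i) * homogeneousComponent t Q
               else 0) := by
      rintro ⟨a, b⟩ hab
      rw [Finset.HasAntidiagonal.mem_antidiagonal] at hab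
      dsimp only
      by_cases ha : a = s
      · subst ha
        have hit : i ≤ t := by omega
        have hb2 : b = t - i := by omega
        have hbt : b ≠ t := by omega
        rw [if_pos rfl, if_neg hbt, add_zero, homComponentZ_of_le Q hit, hb2]
      · by_cases hb : b = t
        · subst hb
          have his : i ≤ s := by omega
          have ha2 : a = s - i := by omega
          rw [if_neg ha, if_pos rfl, zero_add, homComponentZ_of_le P his, ha2]
        · rw [if_neg ha, if_neg hb, add_zero]
          by_cases h1 : s < a
          · rw [homogeneousComponent_eq_zero _ _ h1, zero_mul]
          by_cases h2 : t < b
          · rw [homogeneousComponent_eq_zero _ _ h2, mul_zero]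
          have has : a < s := by omega
          have hbt : b < t := by omega
          have hsum : (s - a) + (t - b) = i := by omega
          rcases hrec (s - a) (by omega) (by omega) with ⟨hp, _⟩ | hS1
          · rw [homComponentZ_of_le P (by omega), show s - (s - a) = a by omega] at hp
            rw [hp, zero_mul]
          · rcases hrec (t - b) (by omega) (by omega) with ⟨_, hq⟩ | hS2
            · rw [homComponentZ_of_le Q (by omega), show t - (t - b) = b by omega] at hq
              rw [hq, mul_zero]
            · exact absurd (hsum ▸ AddSubmonoid.add_mem _ hS1 hS2) hiS
    rw [Finset.sum_congr rfl step, Finset.sum_add_distrib, sum_antidiag_fst, sum_antidiag_snd]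
    congr 1
    · by_cases hit : i ≤ t
      · rw [if_pos (by omega : s ≤ d - i)]
      · rw [homComponentZ_of_lt Q (by omega)]
        simp
    · by_cases his : i ≤ s
      · rw [if_pos (by omega : t ≤ d - i)]
      · rw [homComponentZ_of_lt P (by omega)]
        simp
  have main : ∀ i, 0 < i → i < γ (Fin.last m) →
      i ∉ AddSubmonoid.closure (γ '' {i | i < Fin.last m}) →
      homComponentZ P ((s:ℤ) - i) = 0 ∧ homComponentZ Q ((t:ℤ) - i) = 0 := by
    intro i
    induction i using Nat.strong_induction_on with
    | _ i IH =>
      intro h0 hlt hiS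
      have heq := reduce i h0 hlt hiS (fun i' h0' hlt' => by
        by_cases hS : i' ∈ AddSubmonoid.closure (γ '' {i | i < Fin.last m})
        · exact Or.inr hS
        · exact Or.inl (IH i' hlt' h0' (lt_trans hlt' hlt) hS))
      rw [hFzero i h0 hlt hiS] at heq
      have hp : homComponentZ P ((s:ℤ) - i) = 0 := by
        by_cases his : i ≤ s
        · rw [homComponentZ_of_le P his]
          by_contra hne
          have heq' := heq
          rw [homComponentZ_of_le P his] at heq'
          have hB : homogeneousComponent (s - i) P * homogeneousComponent t Q =
              homogeneousComponent s P * (-(homComponentZ Q ((t:ℤ) - i))) := by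
            linear_combination -heq'
          have hdvd : homogeneousComponent s P ∣ homogeneousComponent (s - i) P :=
            hrel.dvd_of_dvd_mul_right ⟨_, hB⟩
          have hd1 : (homogeneousComponent s P).totalDegree = s :=
            (homogeneousComponent_isHomogeneous s P).totalDegree hPs0
          have hd2 : (homogeneousComponent (s - i) P).totalDegree = s - i :=
            (homogeneousComponent_isHomogeneous (s - i) P).totalDegree hne
          have := auxTD_dvd hdvd hne
          omega
        · exact homComponentZ_of_lt P (by omega)
      refine ⟨hp, ?_⟩
      rw [hp, zero_mul, add_zero] at heq
      exact (mul_eq_zero.1 heq.symm).resolve_left hPs0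
  exact reduce k hk0 hkγ hspan (fun i' h0' hlt' => by
    by_cases hS : i' ∈ AddSubmonoid.closure (γ '' {i | i < Fin.last m})
    · exact Or.inr hS
    · exact Or.inl (main i' h0' (lt_trans hlt' hkγ) hS))
end

section
/- Let 𝔽 be a field and F = F_d + F_{d−γ₁} + ⋯ + F_{d−γ_m} ∈ 𝔽[X₁,…,Xₙ], where F_d and each F_{d−γ_i} are nonzero homogeneous polynomials of degrees d = deg F and d−γ_i respectively, with 0 < γ₁ < ⋯ < γ_m ≤ d, and these are all the nonzero homogeneous components of F. Let k ∈ {1, …, m} be such that γ_k ∉ span_ℕ{γ₁, …, γ_{k−1}}, and assume F_d is squarefree. Suppose F = P·Q with P, Q nonzero of degrees s and t. Then for every natural number i with 0 < i < γ_k and i ∉ span_ℕ{γ₁, …, γ_{k−1}}, the homogeneous component of P in degree s−i and the homogeneous component of Q in degree t−i are both zero. -/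
open MvPolynomial
open Finset

section Aux
variable {n : ℕ} {𝔽 : Type*} [Field 𝔽]

lemma top_comp_ne_zero (P : MvPolynomial (Fin n) 𝔽) (h : P ≠ 0) :
    homogeneousComponent P.totalDegree P ≠ 0 := by
  obtain ⟨b, hb, hb2⟩ := P.support.exists_mem_eq_sup
    (MvPolynomial.support_nonempty.mpr h) (fun m : Fin n →₀ ℕ => m.sum fun _ e => e)
  intro hzero
  have : coeff b (homogeneousComponent P.totalDegree P) = coeff b P := by
    rw [coeff_homogeneousComponent, if_pos]
    rw [MvPolynomial.totalDegree, hb2]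
    simp [Finsupp.degree, Finsupp.sum]
    rfl
  rw [hzero] at this
  exact (mem_support_iff.mp hb) this.symm

lemma hc_mul_s9 (P Q : MvPolynomial (Fin n) 𝔽) (c : ℕ) :
    homogeneousComponent c (P * Q) =
      ∑ a ∈ range (c + 1), homogeneousComponent a P * homogeneousComponent (c - a) Q := by
  set N := P.totalDegree
  set M := Q.totalDegree
  set K := N + M + c with hK
  have hPK : P = ∑ a ∈ range (K + 1), homogeneousComponent a P := by
    conv_lhs => rw [← sum_homogeneousComponent P]
    refine Finset.sum_subset (Finset.range_subset_range.mpr (by omega)) ?_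
    intro x _ hx
    exact homogeneousComponent_eq_zero x P (by
      simp only [Finset.mem_range, not_lt] at hx; omega)
  have hQK : Q = ∑ b ∈ range (K + 1), homogeneousComponent b Q := by
    conv_lhs => rw [← sum_homogeneousComponent Q]
    refine Finset.sum_subset (Finset.range_subset_range.mpr (by omega)) ?_
    intro x _ hx
    exact homogeneousComponent_eq_zero x Q (by
      simp only [Finset.mem_range, not_lt] at hx; omega)
  conv_lhs => rw [hPK, hQK]
  rw [Finset.sum_mul_sum, map_sum]
  have step : ∀ a ∈ range (K + 1),
      (homogeneousComponent c (∑ b ∈ range (K + 1),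
        homogeneousComponent a P * homogeneousComponent b Q)) =
      if a ≤ c then homogeneousComponent a P * homogeneousComponent (c - a) Q else 0 := by
    intro a _
    rw [map_sum]
    have hterm : ∀ b, homogeneousComponent c
        (homogeneousComponent a P * homogeneousComponent b Q) =
        if c = a + b then homogeneousComponent a P * homogeneousComponent b Q else 0 := by
      intro b
      exact homogeneousComponent_of_mem ((mem_homogeneousSubmodule _ _).mpr
        ((homogeneousComponent_isHomogeneous a P).mul (homogeneousComponent_isHomogeneous b Q)))
    simp only [hterm]
    by_cases hac : a ≤ c
    · rw [if_pos hac, Finset.sum_eq_single_of_mem (c - a)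
        (Finset.mem_range.mpr (by omega))]
      · rw [if_pos (by omega)]
      · intro b _ hbne
        rw [if_neg (by omega)]
    · rw [if_neg hac]
      exact Finset.sum_eq_zero fun b _ => if_neg (by omega)
  rw [Finset.sum_congr rfl step, Finset.sum_ite, Finset.sum_const_zero, add_zero]
  apply Finset.sum_congr _ (fun _ _ => rfl)
  ext a
  simp only [Finset.mem_filter, Finset.mem_range]
  omega

lemma top_mul (A B : MvPolynomial (Fin n) 𝔽) (hA : A ≠ 0) (hB : B ≠ 0) :
    (A * B).totalDegree = A.totalDegree + B.totalDegree ∧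
    homogeneousComponent (A.totalDegree + B.totalDegree) (A * B) =
      homogeneousComponent A.totalDegree A * homogeneousComponent B.totalDegree B := by
  set N := A.totalDegree
  set M := B.totalDegree
  have hcomp : homogeneousComponent (N + M) (A * B) =
      homogeneousComponent N A * homogeneousComponent M B := by
    rw [hc_mul_s9]
    rw [Finset.sum_eq_single_of_mem N (Finset.mem_range.mpr (by omega))]
    · have h : N + M - N = M := by omega
      rw [h]
    · intro b hb hbne
      rcases lt_or_ge N b with h | h
      · rw [homogeneousComponent_eq_zero b A h, zero_mul]
      · rw [homogeneousComponent_eq_zero (N + M - b) B (by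
          simp only [Finset.mem_range] at hb; omega), mul_zero]
  refine ⟨?_, hcomp⟩
  have hne : homogeneousComponent (N + M) (A * B) ≠ 0 := by
    rw [hcomp]
    exact mul_ne_zero (top_comp_ne_zero A hA) (top_comp_ne_zero B hB)
  have h1 : (A * B).totalDegree ≤ N + M := totalDegree_mul A B
  have h2 : ¬ (A * B).totalDegree < N + M := fun h => hne (homogeneousComponent_eq_zero _ _ h)
  omega

lemma homComponentZ_coe (P : MvPolynomial (Fin n) 𝔽) (a b : ℕ) (h : b ≤ a) :
    homComponentZ P ((a : ℤ) - b) = homogeneousComponent (a - b) P := by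
  rw [homComponentZ, if_pos (by omega)]
  have h2 : ((a : ℤ) - b).toNat = a - b := by omega
  rw [h2]

lemma homComponentZ_neg (P : MvPolynomial (Fin n) 𝔽) (a b : ℕ) (h : a < b) :
    homComponentZ P ((a : ℤ) - b) = 0 := by
  rw [homComponentZ, if_neg (by omega)]

end Aux

/-- If `γ_k ∉ span_ℕ{γ₁, …, γ_{k−1}}`, `F_d` is squarefree and `F = P·Q`, then for every
`i` with `0 < i < γ_k` and `i ∉ span_ℕ{γ₁, …, γ_{k−1}}`, the homogeneous components
`P_{s−i}` and `Q_{t−i}` both vanish, where `s = deg P`, `t = deg Q`. -/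
theorem components_vanish_below_gap {n m : ℕ} {𝔽 : Type*} [Field 𝔽]
    (F Fd : MvPolynomial (Fin n) 𝔽) (G : Fin (m + 1) → MvPolynomial (Fin n) 𝔽)
    (d : ℕ) (γ : Fin (m + 1) → ℕ)
    (hF : F = Fd + ∑ i, G i)
    (hdeg : F.totalDegree = d)
    (hFd : Fd.IsHomogeneous d) (hFd0 : Fd ≠ 0)
    (hG : ∀ i, (G i).IsHomogeneous (d - γ i)) (hG0 : ∀ i, G i ≠ 0)
    (hpos : 0 < γ 0) (hmono : StrictMono γ) (hle : γ (Fin.last m) ≤ d)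
    (k : Fin (m + 1))
    (hspan : γ k ∉ AddSubmonoid.closure (γ '' {j | j < k}))
    (hsf : Squarefree Fd)
    (P Q : MvPolynomial (Fin n) 𝔽) (hP0 : P ≠ 0) (hQ0 : Q ≠ 0)
    (hPQ : F = P * Q) :
    ∀ i : ℕ, 0 < i → i < γ k → i ∉ AddSubmonoid.closure (γ '' {j | j < k}) →
      homComponentZ P ((P.totalDegree : ℤ) - i) = 0 ∧
        homComponentZ Q ((Q.totalDegree : ℤ) - i) = 0 := by
  classical
  set s := P.totalDegree with hs
  set t := Q.totalDegree with ht
  have hst : s + t = d := by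
    have h1 := (top_mul P Q hP0 hQ0).1
    rw [← hPQ, hdeg] at h1
    omega
  have hγpos : ∀ l, 0 < γ l := fun l => lt_of_lt_of_le hpos (hmono.monotone (Fin.zero_le l))
  have hγle : ∀ l, γ l ≤ d := fun l => le_trans (hmono.monotone (Fin.le_last l)) hle
  have hγk_le : γ k ≤ d := hγle k
  have hFcomp : ∀ c : ℕ, c ≠ d → (∀ l, c ≠ d - γ l) → homogeneousComponent c F = 0 := by
    intro c hc1 hc2
    rw [hF, map_add, map_sum,
      homogeneousComponent_of_mem ((mem_homogeneousSubmodule _ _).mpr hFd), if_neg hc1,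
      Finset.sum_eq_zero, add_zero]
    intro l _
    rw [homogeneousComponent_of_mem ((mem_homogeneousSubmodule _ _).mpr (hG l)),
      if_neg (hc2 l)]
  have hFdeq : Fd = homogeneousComponent s P * homogeneousComponent t Q := by
    have h1 : homogeneousComponent d F = Fd := by
      rw [hF, map_add, map_sum,
        homogeneousComponent_of_mem ((mem_homogeneousSubmodule _ _).mpr hFd), if_pos rfl,
        Finset.sum_eq_zero, add_zero]
      intro l _
      rw [homogeneousComponent_of_mem ((mem_homogeneousSubmodule _ _).mpr (hG l)), if_neg]
      have := hγpos l; have := hγle l; omega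
    rw [← h1, hPQ, ← hst]
    exact (top_mul P Q hP0 hQ0).2
  have hPs : homogeneousComponent s P ≠ 0 := top_comp_ne_zero P hP0
  have hQt : homogeneousComponent t Q ≠ 0 := top_comp_ne_zero Q hQ0
  have hrel : IsRelPrime (homogeneousComponent s P) (homogeneousComponent t Q) := by
    intro c hc1 hc2
    exact hsf c (by rw [hFdeq]; exact mul_dvd_mul hc1 hc2)
  intro i
  induction i using Nat.strong_induction_on with
  | _ i IH =>
  intro hi0 hiγ hiS
  have hid : i ≤ d := le_trans (le_of_lt hiγ) hγk_le
  have hiγl : ∀ l, i ≠ γ l := by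
    intro l hil
    by_cases hlk : l < k
    · exact hiS (hil ▸ AddSubmonoid.subset_closure ⟨l, hlk, rfl⟩)
    · have : γ k ≤ γ l := hmono.monotone (not_lt.mp hlk)
      omega
  have hFdi : homogeneousComponent (d - i) F = 0 := by
    apply hFcomp
    · omega
    · intro l
      have h1 := hiγl l; have h2 := hγle l; omega
  have hsum : ∑ a ∈ Finset.range (d - i + 1),
      homogeneousComponent a P * homogeneousComponent (d - i - a) Q = 0 := by
    rw [← hc_mul_s9, ← hPQ, hFdi]
  have hterm : ∀ a ∈ Finset.range (d - i + 1), a ≠ s → (a : ℤ) ≠ (s : ℤ) - i →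
      homogeneousComponent a P * homogeneousComponent (d - i - a) Q = 0 := by
    intro a ha has haz
    rw [Finset.mem_range] at ha
    rcases lt_or_ge s a with h | hsa
    · rw [homogeneousComponent_eq_zero a P h, zero_mul]
    rcases lt_or_ge t (d - i - a) with h | hta
    · rw [homogeneousComponent_eq_zero _ Q h, mul_zero]
    set j := s - a with hj
    have hj1 : 0 < j := by omega
    have hji : j < i := by
      have hji' : j ≤ i := by omega
      have hne : j ≠ i := by
        intro he
        apply haz
        omega
      omega
    by_cases hjS : j ∈ AddSubmonoid.closure (γ '' {j | j < k})
    · have hj'S : i - j ∉ AddSubmonoid.closure (γ '' {j | j < k}) := by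
        intro hmem
        apply hiS
        have hadd := AddSubmonoid.add_mem _ hjS hmem
        rwa [Nat.add_sub_cancel' (le_of_lt hji)] at hadd
      have h2 := (IH (i - j) (by omega) (by omega) (by omega) hj'S).2
      rw [homComponentZ_coe Q t (i - j) (by omega)] at h2
      have he : d - i - a = t - (i - j) := by omega
      rw [he, h2, mul_zero]
    · have h2 := (IH j (by omega) hj1 (by omega) hjS).1
      rw [homComponentZ_coe P s j (by omega)] at h2
      have he : a = s - j := by omega
      rw [he, h2, zero_mul]
  by_cases his : i ≤ s <;> by_cases hit : i ≤ t
  · -- main case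
    have hmain : homogeneousComponent (s - i) P * homogeneousComponent t Q +
        homogeneousComponent s P * homogeneousComponent (t - i) Q = 0 := by
      rw [← hsum]
      rw [Finset.sum_eq_add_of_mem (s - i) s (Finset.mem_range.mpr (by omega))
        (Finset.mem_range.mpr (by omega)) (by omega)
        (fun c hc hcn => hterm c hc hcn.2 (by
          rw [Finset.mem_range] at hc
          have := hcn.1
          omega))]
      have e1 : d - i - (s - i) = t := by omega
      have e2 : d - i - s = t - i := by omega
      rw [e1, e2]
    have hdvd : homogeneousComponent s P ∣
        homogeneousComponent (s - i) P * homogeneousComponent t Q := by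
      refine ⟨-(homogeneousComponent (t - i) Q), ?_⟩
      linear_combination hmain
    have hdvdA := hrel.dvd_of_dvd_mul_right hdvd
    have hA0 : homogeneousComponent (s - i) P = 0 := by
      by_contra hA
      obtain ⟨c, hc⟩ := hdvdA
      have hc0 : c ≠ 0 := by
        rintro rfl
        rw [mul_zero] at hc
        exact hA hc
      have hPsdeg : (homogeneousComponent s P).totalDegree = s :=
        (homogeneousComponent_isHomogeneous s P).totalDegree hPs
      have hAdeg : (homogeneousComponent (s - i) P).totalDegree = s - i :=
        (homogeneousComponent_isHomogeneous (s - i) P).totalDegree hA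
      have hmul := (top_mul (homogeneousComponent s P) c hPs hc0).1
      rw [← hc] at hmul
      omega
    have hB0 : homogeneousComponent (t - i) Q = 0 := by
      rw [hA0, zero_mul, zero_add] at hmain
      rcases mul_eq_zero.mp hmain with h | h
      · exact absurd h hPs
      · exact h
    exact ⟨by rw [homComponentZ_coe P s i his]; exact hA0,
      by rw [homComponentZ_coe Q t i hit]; exact hB0⟩
  · -- i ≤ s, t < i
    push_neg at hit
    have hsingle : homogeneousComponent (s - i) P * homogeneousComponent t Q = 0 := by
      rw [← hsum]
      rw [Finset.sum_eq_single_of_mem (s - i) (Finset.mem_range.mpr (by omega))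
        (fun b hb hbne => hterm b hb (by rw [Finset.mem_range] at hb; omega) (by omega))]
      have e1 : d - i - (s - i) = t := by omega
      rw [e1]
    have hA0 : homogeneousComponent (s - i) P = 0 := by
      rcases mul_eq_zero.mp hsingle with h | h
      · exact h
      · exact absurd h hQt
    exact ⟨by rw [homComponentZ_coe P s i his]; exact hA0,
      homComponentZ_neg Q t i hit⟩
  · -- s < i, i ≤ t
    push_neg at his
    have hsingle : homogeneousComponent s P * homogeneousComponent (t - i) Q = 0 := by
      rw [← hsum]
      rw [Finset.sum_eq_single_of_mem s (Finset.mem_range.mpr (by omega))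
        (fun b hb hbne => hterm b hb hbne (by omega))]
      have e2 : d - i - s = t - i := by omega
      rw [e2]
    have hB0 : homogeneousComponent (t - i) Q = 0 := by
      rcases mul_eq_zero.mp hsingle with h | h
      · exact absurd h hPs
      · exact h
    exact ⟨homComponentZ_neg P s i his,
      by rw [homComponentZ_coe Q t i hit]; exact hB0⟩
  · push_neg at his hit
    exact ⟨homComponentZ_neg P s i his, homComponentZ_neg Q t i hit⟩
end

section
/- Let 𝔽 be a field and F = F_d + F_{d−γ₁} + ⋯ + F_{d−γ_m} ∈ 𝔽[X₁,…,Xₙ], where F_d and each F_{d−γ_i} are nonzero homogeneous polynomials of degrees d = deg F and d−γ_i respectively, with 0 < γ₁ < ⋯ < γ_m ≤ d, and these are all the nonzero homogeneous components of F. Let k ∈ {1, …, m} be such that γ_k ∉ span_ℕ{γ₁, …, γ_{k−1}} and F_d and F_{d−γ_k} have no common nonconstant factor, and assume F_d is squarefree. Then for every nonconstant polynomial P dividing F, the homogeneous component of P in degree deg P − γ_k is nonzero. -/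
open MvPolynomial Finset

section Helpers
variable {σ : Type*} {R : Type*} [CommRing R]


lemma topComp_ne_zero (P : MvPolynomial σ R) (hP : P ≠ 0) :
    homogeneousComponent P.totalDegree P ≠ 0 := by
  classical
  obtain ⟨s, hs, hdeg⟩ := Finset.exists_mem_eq_sup P.support
    (by simpa using hP) (fun s => s.sum fun _ e => e)
  intro h
  have hd : s.degree = P.totalDegree := by
    rw [MvPolynomial.totalDegree, hdeg, Finsupp.degree, Finsupp.sum]; rfl
  have : coeff s (homogeneousComponent P.totalDegree P) = coeff s P := by
    rw [coeff_homogeneousComponent, if_pos hd]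
  rw [h] at this
  exact (mem_support_iff.mp hs) this.symm

lemma homComp_mul (P Q : MvPolynomial σ R) (e : ℕ) :
    homogeneousComponent e (P * Q) =
      ∑ ij ∈ Finset.HasAntidiagonal.antidiagonal e,
        homogeneousComponent ij.1 P * homogeneousComponent ij.2 Q := by
  classical
  conv_lhs => rw [← sum_homogeneousComponent P, ← sum_homogeneousComponent Q]
  rw [Finset.sum_mul_sum]
  rw [map_sum]
  have : ∀ i ∈ range (P.totalDegree + 1),
      (homogeneousComponent e) (∑ j ∈ range (Q.totalDegree + 1),
        homogeneousComponent i P * homogeneousComponent j Q)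
      = ∑ j ∈ range (Q.totalDegree + 1),
          if e = i + j then homogeneousComponent i P * homogeneousComponent j Q else 0 := by
    intro i _
    rw [map_sum]
    refine Finset.sum_congr rfl fun j _ => ?_
    exact homogeneousComponent_of_mem
      (((homogeneousComponent_isHomogeneous i P).mul
        (homogeneousComponent_isHomogeneous j Q)))
  rw [Finset.sum_congr rfl this, ← Finset.sum_product']
  rw [← Finset.sum_filter]
  apply Finset.sum_subset
  · intro ij hij
    simp only [Finset.mem_filter] at hij
    rw [Finset.HasAntidiagonal.mem_antidiagonal]
    omega
  · intro ij hij hnot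
    simp only [Finset.mem_filter, Finset.mem_product, Finset.mem_range,
      Finset.HasAntidiagonal.mem_antidiagonal] at hij hnot
    rcases lt_or_ge P.totalDegree ij.1 with h | h
    · rw [homogeneousComponent_eq_zero _ P h, zero_mul]
    · rw [homogeneousComponent_eq_zero _ Q (by omega), mul_zero]

lemma homComp_mul_two_terms (P Q : MvPolynomial σ R) (a : ℕ) (ha : 0 < a)
    (ha' : a ≤ P.totalDegree + Q.totalDegree)
    (hmid : ∀ i j, i + j = P.totalDegree + Q.totalDegree - a →
      i < P.totalDegree → j < Q.totalDegree →
      homogeneousComponent i P * homogeneousComponent j Q = 0) :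
    homogeneousComponent (P.totalDegree + Q.totalDegree - a) (P * Q) =
      (if a ≤ P.totalDegree then
        homogeneousComponent (P.totalDegree - a) P * homogeneousComponent Q.totalDegree Q
       else 0) +
      (if a ≤ Q.totalDegree then
        homogeneousComponent P.totalDegree P * homogeneousComponent (Q.totalDegree - a) Q
       else 0) := by
  classical
  set p := P.totalDegree with hp
  set q := Q.totalDegree with hq
  rw [homComp_mul]
  have hzero : ∀ c : ℕ × ℕ, c ∈ Finset.HasAntidiagonal.antidiagonal (p + q - a) →
      c ≠ (p - a, q) → c ≠ (p, q - a) →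
      homogeneousComponent c.1 P * homogeneousComponent c.2 Q = 0 := by
    intro c hc h1 h2
    rw [Finset.HasAntidiagonal.mem_antidiagonal] at hc
    rcases lt_or_ge p c.1 with h | h
    · rw [homogeneousComponent_eq_zero _ P h, zero_mul]
    rcases lt_or_ge q c.2 with h' | h'
    · rw [homogeneousComponent_eq_zero _ Q h', mul_zero]
    -- now c.1 ≤ p, c.2 ≤ q
    rcases eq_or_lt_of_le h with h | h
    · exfalso; apply h2; have : c.2 = q - a := by omega
      exact Prod.ext h this
    rcases eq_or_lt_of_le h' with h' | h'
    · exfalso; apply h1; have : c.1 = p - a := by omega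
      exact Prod.ext this h'
    exact hmid c.1 c.2 hc h h'
  by_cases hap : a ≤ p <;> by_cases haq : a ≤ q
  · rw [if_pos hap, if_pos haq]
    refine Finset.sum_eq_add_of_mem (p - a, q) (p, q - a) ?_ ?_ ?_ ?_
    · rw [Finset.HasAntidiagonal.mem_antidiagonal]; omega
    · rw [Finset.HasAntidiagonal.mem_antidiagonal]; omega
    · intro h; apply absurd (congrArg Prod.fst h); simp; omega
    · intro c hc ⟨h1, h2⟩; exact hzero c hc h1 h2
  · rw [if_pos hap, if_neg haq, add_zero]
    refine Finset.sum_eq_single_of_mem (p - a, q) ?_ ?_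
    · rw [Finset.HasAntidiagonal.mem_antidiagonal]; omega
    · intro c hc h1
      refine hzero c hc h1 ?_
      intro h; rw [Finset.HasAntidiagonal.mem_antidiagonal, h] at hc; simp at hc; omega
  · rw [if_neg hap, if_pos haq, zero_add]
    refine Finset.sum_eq_single_of_mem (p, q - a) ?_ ?_
    · rw [Finset.HasAntidiagonal.mem_antidiagonal]; omega
    · intro c hc h2
      refine hzero c hc ?_ h2
      intro h; rw [Finset.HasAntidiagonal.mem_antidiagonal, h] at hc; simp at hc; omega
  · rw [if_neg hap, if_neg haq, add_zero]
    refine Finset.sum_eq_zero fun c hc => ?_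
    refine hzero c hc ?_ ?_ <;> intro h <;>
      rw [Finset.HasAntidiagonal.mem_antidiagonal, h] at hc <;> simp at hc <;> omega

lemma totalDegree_le_of_dvd {σ R : Type*} [CommRing R] [IsDomain R]
    {A B : MvPolynomial σ R} (h : A ∣ B) (hB : B ≠ 0) :
    A.totalDegree ≤ B.totalDegree := by
  obtain ⟨C, rfl⟩ := h
  have hA : A ≠ 0 := fun h => hB (by simp [h])
  have hC : C ≠ 0 := fun h => hB (by simp [h])
  by_contra hlt
  push_neg at hlt
  have h1 : homogeneousComponent (A.totalDegree + C.totalDegree) (A * C) =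
      homogeneousComponent A.totalDegree A * homogeneousComponent C.totalDegree C := by
    rw [homComp_mul]
    refine Finset.sum_eq_single_of_mem (A.totalDegree, C.totalDegree)
      (by rw [Finset.HasAntidiagonal.mem_antidiagonal]) ?_
    intro c hc hne
    rw [Finset.HasAntidiagonal.mem_antidiagonal] at hc
    rcases lt_or_ge A.totalDegree c.1 with h | h
    · rw [homogeneousComponent_eq_zero _ A h, zero_mul]
    rcases lt_or_ge C.totalDegree c.2 with h' | h'
    · rw [homogeneousComponent_eq_zero _ C h', mul_zero]
    exfalso; apply hne
    have : c.1 = A.totalDegree := by omega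
    exact Prod.ext this (by omega)
  have h2 : homogeneousComponent (A.totalDegree + C.totalDegree) (A * C) = 0 :=
    homogeneousComponent_eq_zero _ _ (by omega)
  rw [h1] at h2
  rcases mul_eq_zero.mp h2 with h | h
  · exact topComp_ne_zero A hA h
  · exact topComp_ne_zero C hC h

end Helpers

/-- If `γ_k ∉ span_ℕ{γ₁, …, γ_{k−1}}`, the forms `F_d` and `F_{d−γ_k}` have no common
nonconstant factor, and `F_d` is squarefree, then every nonconstant divisor `P` of `F`
has a nonzero homogeneous component in degree `deg P − γ_k`. -/
theorem component_at_gap_ne_zero {n m : ℕ} {𝔽 : Type*} [Field 𝔽]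
    (F Fd : MvPolynomial (Fin n) 𝔽) (G : Fin (m + 1) → MvPolynomial (Fin n) 𝔽)
    (d : ℕ) (γ : Fin (m + 1) → ℕ)
    (hF : F = Fd + ∑ i, G i)
    (hdeg : F.totalDegree = d)
    (hFd : Fd.IsHomogeneous d) (hFd0 : Fd ≠ 0)
    (hG : ∀ i, (G i).IsHomogeneous (d - γ i)) (hG0 : ∀ i, G i ≠ 0)
    (hpos : 0 < γ 0) (hmono : StrictMono γ) (hle : γ (Fin.last m) ≤ d)
    (k : Fin (m + 1))
    (hspan : γ k ∉ AddSubmonoid.closure (γ '' {j | j < k}))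
    (hrp : ∀ D : MvPolynomial (Fin n) 𝔽, D ∣ Fd → D ∣ G k → IsUnit D)
    (hsf : Squarefree Fd) :
    ∀ P : MvPolynomial (Fin n) 𝔽, P.totalDegree ≠ 0 → P ∣ F →
      homComponentZ P ((P.totalDegree : ℤ) - γ k) ≠ 0 := by
  classical
  intro P hP0 hPF
  obtain ⟨Q, hQ⟩ := hPF
  set M := AddSubmonoid.closure (γ '' {j | j < k}) with hM
  set p := P.totalDegree with hp
  set q := Q.totalDegree with hq
  -- basic facts about γ
  have hγpos : ∀ i, 0 < γ i := fun i => lt_of_lt_of_le hpos (hmono.monotone (Fin.zero_le i))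
  have hγle : ∀ i, γ i ≤ d := fun i => le_trans (hmono.monotone (Fin.le_last i)) hle
  have hdpos : 0 < d := lt_of_lt_of_le (hγpos 0) (hγle 0)
  -- components of F
  have compF : ∀ e : ℕ, homogeneousComponent e F =
      (if e = d then Fd else 0) + ∑ i, (if e = d - γ i then G i else 0) := by
    intro e
    rw [hF, map_add, map_sum,
      homogeneousComponent_of_mem ((mem_homogeneousSubmodule _ _).mpr hFd)]
    congr 1
    exact Finset.sum_congr rfl fun i _ =>
      homogeneousComponent_of_mem ((mem_homogeneousSubmodule _ _).mpr (hG i))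
  have compF_d : homogeneousComponent d F = Fd := by
    rw [compF d, if_pos rfl, Finset.sum_eq_zero, add_zero]
    intro i _
    rw [if_neg]
    have := hγpos i; have := hγle i; omega
  have compF_at : ∀ a : ℕ, 0 < a → a ≤ d → (∀ i, a ≠ γ i) →
      homogeneousComponent (d - a) F = 0 := by
    intro a ha had hai
    rw [compF, if_neg (by omega), Finset.sum_eq_zero, add_zero]
    intro i _
    rw [if_neg]
    intro h
    exact hai i (by have := hγle i; omega)
  have compF_k : homogeneousComponent (d - γ k) F = G k := by
    rw [compF, if_neg (by have := hγpos k; have := hγle k; omega)]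
    rw [Finset.sum_eq_single k (fun i _ hik => by
      rw [if_neg]; intro h
      exact hik (hmono.injective (by have := hγle i; have := hγle k; omega))) (by simp),
      if_pos rfl, zero_add]
  -- nonzeroness
  have hFne : F ≠ 0 := fun h => hFd0 (by rw [← compF_d, h, map_zero])
  have hPne : P ≠ 0 := fun h => hFne (by rw [hQ, h, zero_mul])
  have hQne : Q ≠ 0 := fun h => hFne (by rw [hQ, h, mul_zero])
  have hPtop : homogeneousComponent p P ≠ 0 := topComp_ne_zero P hPne
  have hQtop : homogeneousComponent q Q ≠ 0 := topComp_ne_zero Q hQne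
  -- p + q = d
  have htop : homogeneousComponent (p + q) F =
      homogeneousComponent p P * homogeneousComponent q Q := by
    rw [hQ, homComp_mul]
    refine Finset.sum_eq_single_of_mem (p, q) (by rw [Finset.HasAntidiagonal.mem_antidiagonal]) ?_
    intro c hc hne
    rw [Finset.HasAntidiagonal.mem_antidiagonal] at hc
    rcases lt_or_ge p c.1 with h | h
    · rw [homogeneousComponent_eq_zero _ P h, zero_mul]
    rcases lt_or_ge q c.2 with h' | h'
    · rw [homogeneousComponent_eq_zero _ Q h', mul_zero]
    exact absurd (Prod.ext (by omega) (by omega)) hne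
  have htopne : homogeneousComponent p P * homogeneousComponent q Q ≠ 0 :=
    mul_ne_zero hPtop hQtop
  have hpq : p + q = d := by
    have h1 : d ≤ p + q := by rw [← hdeg, hQ]; exact totalDegree_mul P Q
    have h2 : p + q ≤ d := by
      by_contra h
      exact htopne (by rw [← htop]; exact homogeneousComponent_eq_zero _ _ (by omega))
    omega
  have hFdPQ : Fd = homogeneousComponent p P * homogeneousComponent q Q := by
    rw [← compF_d, ← hpq, htop]
  -- relative primality of top components
  have hγkd : γ k ≤ d := hγle k
  have hrel : IsRelPrime (homogeneousComponent p P) (homogeneousComponent q Q) :=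
    IsRelPrime.of_squarefree_mul (hFdPQ ▸ hsf)
  -- the claim: gaps below γ k lie in M
  have claim : ∀ a : ℕ, a < γ k → a ∉ M →
      (a ≤ p → homogeneousComponent (p - a) P = 0) ∧
      (a ≤ q → homogeneousComponent (q - a) Q = 0) := by
    intro a
    induction a using Nat.strong_induction_on with
    | _ a IH =>
      intro hak haM
      have ha : 0 < a := by
        rcases Nat.eq_zero_or_pos a with h | h
        · exact absurd (h ▸ AddSubmonoid.zero_mem M) haM
        · exact h
      have hmid : ∀ i j, i + j = p + q - a → i < p → j < q →
          homogeneousComponent i P * homogeneousComponent j Q = 0 := by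
        intro i j hij hi hj
        by_cases hPi : homogeneousComponent i P = 0
        · rw [hPi, zero_mul]
        by_cases hQj : homogeneousComponent j Q = 0
        · rw [hQj, mul_zero]
        exfalso
        have ha1 : p - i < a := by omega
        have ha2 : q - j < a := by omega
        have h1 : (p - i) ∈ M := by
          by_contra h
          exact hPi (by
            have := (IH (p - i) ha1 (by omega) h).1 (by omega)
            rwa [show p - (p - i) = i by omega] at this)
        have h2 : (q - j) ∈ M := by
          by_contra h
          exact hQj (by
            have := (IH (q - j) ha2 (by omega) h).2 (by omega)
            rwa [show q - (q - j) = j by omega] at this)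
        have : a = (p - i) + (q - j) := by omega
        exact haM (this ▸ AddSubmonoid.add_mem M h1 h2)
      have hzero : homogeneousComponent (p + q - a) (P * Q) = 0 := by
        rw [← hQ, hpq]
        refine compF_at a ha (by omega) ?_
        intro i hai
        rcases lt_or_ge i k with hik | hik
        · exact haM (hai ▸ AddSubmonoid.subset_closure ⟨i, hik, rfl⟩)
        · have := hmono.monotone hik; omega
      rw [homComp_mul_two_terms P Q a ha (by omega) hmid] at hzero
      by_cases hap : a ≤ p <;> by_cases haq : a ≤ q
      · rw [if_pos hap, if_pos haq] at hzero
        have hPa : homogeneousComponent (p - a) P = 0 := by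
          by_contra hne
          have hdvd : homogeneousComponent p P ∣
              homogeneousComponent (p - a) P * homogeneousComponent q Q := by
            refine ⟨-(homogeneousComponent (q - a) Q), ?_⟩
            have h := eq_neg_of_add_eq_zero_left hzero
            rw [h]; ring
          have hdvd' : homogeneousComponent p P ∣ homogeneousComponent (p - a) P :=
            hrel.dvd_of_dvd_mul_right hdvd
          have hle1 : p ≤ (homogeneousComponent (p - a) P).totalDegree := by
            have := totalDegree_le_of_dvd hdvd' hne
            rwa [(homogeneousComponent_isHomogeneous p P).totalDegree hPtop] at this
          have hle2 : (homogeneousComponent (p - a) P).totalDegree ≤ p - a :=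
            (homogeneousComponent_isHomogeneous (p - a) P).totalDegree_le
          omega
        rw [hPa, zero_mul, zero_add, mul_eq_zero] at hzero
        refine ⟨fun _ => hPa, fun _ => hzero.resolve_left hPtop⟩
      · rw [if_pos hap, if_neg haq, add_zero, mul_eq_zero] at hzero
        exact ⟨fun _ => hzero.resolve_right hQtop, fun h => absurd h haq⟩
      · rw [if_neg hap, if_pos haq, zero_add, mul_eq_zero] at hzero
        exact ⟨fun h => absurd h hap, fun _ => hzero.resolve_left hPtop⟩
      · exact ⟨fun h => absurd h hap, fun h => absurd h haq⟩
  -- final step at a = γ k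
  have hγk := hγle k
  have hmidk : ∀ i j, i + j = p + q - γ k → i < p → j < q →
      homogeneousComponent i P * homogeneousComponent j Q = 0 := by
    intro i j hij hi hj
    by_cases hPi : homogeneousComponent i P = 0
    · rw [hPi, zero_mul]
    by_cases hQj : homogeneousComponent j Q = 0
    · rw [hQj, mul_zero]
    exfalso
    have h1 : (p - i) ∈ M := by
      by_contra h
      exact hPi (by
        have := (claim (p - i) (by omega) h).1 (by omega)
        rwa [show p - (p - i) = i by omega] at this)
    have h2 : (q - j) ∈ M := by
      by_contra h
      exact hQj (by
        have := (claim (q - j) (by omega) h).2 (by omega)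
        rwa [show q - (q - j) = j by omega] at this)
    have : γ k = (p - i) + (q - j) := by omega
    exact hspan (this ▸ AddSubmonoid.add_mem M h1 h2)
  have hGk : G k =
      (if γ k ≤ p then
        homogeneousComponent (p - γ k) P * homogeneousComponent q Q else 0) +
      (if γ k ≤ q then
        homogeneousComponent p P * homogeneousComponent (q - γ k) Q else 0) := by
    rw [← compF_k, ← hpq, hQ]
    exact homComp_mul_two_terms P Q (γ k) (hγpos k) (by omega) hmidk
  -- if the X-term vanishes we get a contradiction
  have hcontra : ((if γ k ≤ p then
      homogeneousComponent (p - γ k) P * homogeneousComponent q Q else 0) = 0) → False := by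
    intro hX
    rw [hX, zero_add] at hGk
    by_cases haq : γ k ≤ q
    · rw [if_pos haq] at hGk
      have hdvdG : homogeneousComponent p P ∣ G k := hGk ▸ dvd_mul_right _ _
      have hdvdF : homogeneousComponent p P ∣ Fd := hFdPQ ▸ dvd_mul_right _ _
      have hu := hrp _ hdvdF hdvdG
      have : (homogeneousComponent p P).totalDegree = 0 := by
        have := totalDegree_le_of_dvd hu.dvd one_ne_zero
        simpa using this
      rw [(homogeneousComponent_isHomogeneous p P).totalDegree hPtop] at this
      exact hP0 this
    · rw [if_neg haq] at hGk
      exact hG0 k hGk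
  -- conclude
  unfold homComponentZ
  by_cases hkp : γ k ≤ p
  · rw [if_pos (by omega : (0:ℤ) ≤ (p : ℤ) - γ k)]
    intro h
    apply hcontra
    rw [if_pos hkp]
    have : ((p : ℤ) - γ k).toNat = p - γ k := by omega
    rw [this] at h
    rw [h, zero_mul]
  · rw [if_neg (by omega : ¬ (0:ℤ) ≤ (p : ℤ) - γ k)]
    exact (hcontra (if_neg hkp)).elim
end
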